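/- Let a, b, d be integers with 1 ≤ a < b and d ≥ C(b, a), and let M be a finite matroid with no minor isomorphic to U_{a+1,b}. Then no d-minimal cover of M contains a set of rank greater than a, and τ_a(M) ≤ τ^d(M) ≤ d^a · τ_a(M). -/

import Mathlib

open Set
open scoped Classical

namespace Matroid

variable {α β : Type*}

/-- The rank of a set `X` in a matroid `M`: the maximum size of an independent subset of `X`
(appropriate for finite matroids). -/
noncomputable def rk (M : Matroid α) (X : Set α) : ℕ :=
  sSup {n | ∃ I, I ⊆ X ∧ M.Indep I ∧ I.ncard = n}

/-- The rank `r(M)` of a matroid `M`. -/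
noncomputable def rank (M : Matroid α) : ℕ := M.rk M.E

/-- The deletion `M \ D` of a set `D` from `M`. -/
def delete' (M : Matroid α) (D : Set α) : Matroid α := M ↾ (M.E \ D)

/-- The contraction `M / C` of a set `C` in `M`, defined via duality. -/
def contract' (M : Matroid α) (C : Set α) : Matroid α := (M✶.delete' C)✶

/-- `N` is a minor of `M`, i.e. `N = M / C \ D` for some sets `C` and `D`. -/
def IsMinor' (N M : Matroid α) : Prop := ∃ C D : Set α, (M.contract' C).delete' D = N

/-- An isomorphism between matroids, possibly on different ground types. -/
def IsIso (M : Matroid α) (N : Matroid β) : Prop :=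
  ∃ e : M.E ≃ N.E, ∀ I : Set M.E, M.Indep ((↑) '' I) ↔ N.Indep ((↑) '' (e '' I))

/-- `N` is isomorphic to the uniform matroid `U_{k,n}`: the ground set has `n` elements and
the independent sets are exactly the subsets with at most `k` elements. -/
def IsUnif (N : Matroid α) (k n : ℕ) : Prop :=
  N.E.Finite ∧ N.E.ncard = n ∧ ∀ I ⊆ N.E, (N.Indep I ↔ I.ncard ≤ k)

/-- `M` has a minor isomorphic to `U_{k,n}`. -/
def HasUnifMinor (M : Matroid α) (k n : ℕ) : Prop :=
  ∃ N : Matroid α, N.IsMinor' M ∧ N.IsUnif k n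

/-- `τ_a(M)`: the minimum size of a collection of subsets of `E(M)`, each of rank at most `a`,
whose union is `E(M)`. -/
noncomputable def tau (M : Matroid α) (a : ℕ) : ℕ :=
  sInf {n | ∃ 𝒞 : Finset (Set α),
    𝒞.card = n ∧ (∀ X ∈ 𝒞, X ⊆ M.E ∧ M.rk X ≤ a) ∧ M.E ⊆ ⋃₀ ↑𝒞}

/-- `M` is `d`-thick: every collection of sets, each of rank less than `r(M)`, whose union
is `E(M)`, has at least `d` members. -/
def Thick (M : Matroid α) (d : ℕ) : Prop :=
  ∀ 𝒞 : Finset (Set α), (∀ X ∈ 𝒞, X ⊆ M.E ∧ M.rk X < M.rank) → M.E ⊆ ⋃₀ ↑𝒞 → d ≤ 𝒞.card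

/-- A set `X` is `d`-thick in `M` if the restriction `M|X` is `d`-thick. -/
def ThickIn (M : Matroid α) (d : ℕ) (X : Set α) : Prop := (M ↾ X).Thick d

/-- A collection of sets is simple in `M` if its members are pairwise dissimilar,
i.e. distinct members have distinct closures. -/
def SimpleColl (M : Matroid α) (𝒳 : Finset (Set α)) : Prop :=
  ∀ X ∈ 𝒳, ∀ Y ∈ 𝒳, M.closure X = M.closure Y → X = Y

/-- `ε_M(𝒳)`: the maximum size of a subcollection of `𝒳` that is simple in `M`. -/
noncomputable def eps (M : Matroid α) (𝒳 : Finset (Set α)) : ℕ :=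
  sSup {n | ∃ 𝒴 : Finset (Set α), 𝒴 ⊆ 𝒳 ∧ M.SimpleColl 𝒴 ∧ 𝒴.card = n}

/-- `𝒳` is `d`-firm in `M`: every subcollection `𝒳'` with `|𝒳'| > |𝒳|/d` has the same rank
as `𝒳`. -/
def Firm (M : Matroid α) (d : ℕ) (𝒳 : Finset (Set α)) : Prop :=
  ∀ 𝒳' ⊆ 𝒳, 𝒳.card < d * 𝒳'.card → M.rk (⋃₀ ↑𝒳') = M.rk (⋃₀ ↑𝒳)

/-- `ℱ` is a cover of the collection `𝒳` in `M`: every member of `𝒳` is contained in a member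
of `ℱ`. -/
def CoverOf (M : Matroid α) (ℱ 𝒳 : Finset (Set α)) : Prop :=
  (∀ F ∈ ℱ, F ⊆ M.E) ∧ ∀ X ∈ 𝒳, ∃ F ∈ ℱ, X ⊆ F

/-- `ℱ` is a cover of the matroid `M`: every element of `E(M)` lies in a member of `ℱ`. -/
def CoverOfGround (M : Matroid α) (ℱ : Finset (Set α)) : Prop :=
  (∀ F ∈ ℱ, F ⊆ M.E) ∧ M.E ⊆ ⋃₀ ↑ℱ

/-- The weight `wt^d_M(ℱ) = Σ_{F ∈ ℱ} d^{r_M(F)}`. -/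
noncomputable def wt (M : Matroid α) (d : ℕ) (ℱ : Finset (Set α)) : ℕ :=
  ∑ F ∈ ℱ, d ^ M.rk F

/-- `ℱ` is a `d`-minimal cover of the collection `𝒳` in `M`. -/
def MinimalCoverOf (M : Matroid α) (d : ℕ) (ℱ 𝒳 : Finset (Set α)) : Prop :=
  M.CoverOf ℱ 𝒳 ∧ ∀ ℱ' : Finset (Set α), M.CoverOf ℱ' 𝒳 → M.wt d ℱ ≤ M.wt d ℱ'

/-- `ℱ` is a `d`-minimal cover of the matroid `M`. -/
def MinimalCoverOfGround (M : Matroid α) (d : ℕ) (ℱ : Finset (Set α)) : Prop :=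
  M.CoverOfGround ℱ ∧ ∀ ℱ' : Finset (Set α), M.CoverOfGround ℱ' → M.wt d ℱ ≤ M.wt d ℱ'

/-- `τ^d(M)`: the minimum weight of a cover of `M`. -/
noncomputable def tauW (M : Matroid α) (d : ℕ) : ℕ :=
  sInf {n | ∃ ℱ : Finset (Set α), M.CoverOfGround ℱ ∧ M.wt d ℱ = n}

/-- `𝒳` is `d`-scattered in `M`: every member of `𝒳` is `d`-thick in `M`, and
`{cl_M(X) : X ∈ 𝒳}` is a `d`-minimal cover of `𝒳` in `M`. -/
def Scattered (M : Matroid α) (d : ℕ) (𝒳 : Finset (Set α)) : Prop :=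
  (∀ X ∈ 𝒳, M.ThickIn d X) ∧ M.MinimalCoverOf d (𝒳.image M.closure) 𝒳

/-- `(M, 𝒮; L)` is an `(a, q, h, d)`-pyramid, where `h = L.length` and `L` lists the
elements `e_1, …, e_h`. -/
def IsPyramid (M : Matroid α) (𝒮 : Finset (Set α)) (L : List α) (a q d : ℕ) : Prop :=
  L.Nodup ∧ M.Indep {x | x ∈ L} ∧
  𝒮.Nonempty ∧
  (∀ S ∈ 𝒮, S ⊆ M.E ∧ M.rk S = a) ∧
  (∀ S ∈ 𝒮, M.rk (S ∪ {x | x ∈ L}) = M.rk S + M.rk {x | x ∈ L}) ∧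
  (∀ i < L.length, ∀ S ∈ 𝒮, ∃ f : Fin q → Set α,
    (∀ j, f j ∈ 𝒮) ∧
    (∀ j k, j ≠ k →
      (M.contract' {x | x ∈ L.take i}).closure (f j) ≠
        (M.contract' {x | x ∈ L.take i}).closure (f k)) ∧
    (∀ j, (M.contract' {x | x ∈ L.take (i+1)}).closure (f j) =
      (M.contract' {x | x ∈ L.take (i+1)}).closure S)) ∧
  (∀ S ∈ 𝒮, M.ThickIn d S)

/-- `M` is representable over the field `F`. -/
def RepresentableOver (M : Matroid α) (F : Type*) [Field F] : Prop :=
  ∃ (n : ℕ) (φ : α → (Fin n → F)),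
    ∀ I ⊆ M.E, (M.Indep I ↔ LinearIndependent F (fun x : I => φ x))

end Matroid

namespace Matroid

section Statement15Aux

variable {α : Type*} {M : Matroid α} {I J X Y F B S : Set α} {a b d : ℕ}

private lemma rkSet_nonempty (M : Matroid α) (X : Set α) :
    Set.Nonempty {n | ∃ I, I ⊆ X ∧ M.Indep I ∧ I.ncard = n} :=
  ⟨0, ∅, empty_subset _, M.empty_indep, by simp⟩

private lemma rkSet_bdd (M : Matroid α) [M.Finite] (X : Set α) :
    BddAbove {n | ∃ I, I ⊆ X ∧ M.Indep I ∧ I.ncard = n} := by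
  refine ⟨M.E.ncard, ?_⟩
  rintro n ⟨I, -, hI, rfl⟩
  exact Set.ncard_le_ncard hI.subset_ground M.ground_finite

lemma ncard_le_rk_of_indep [M.Finite] (hIX : I ⊆ X) (hI : M.Indep I) :
    I.ncard ≤ M.rk X :=
  le_csSup (rkSet_bdd M X) ⟨I, hIX, hI, rfl⟩

lemma exists_rk_indep (M : Matroid α) [M.Finite] (X : Set α) :
    ∃ I, I ⊆ X ∧ M.Indep I ∧ I.ncard = M.rk X :=
  Nat.sSup_mem (rkSet_nonempty M X) (rkSet_bdd M X)

lemma rk_le_ncard [M.Finite] (hX : X.Finite) : M.rk X ≤ X.ncard := by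
  obtain ⟨I, hIX, hI, hcard⟩ := M.exists_rk_indep X
  rw [← hcard]
  exact Set.ncard_le_ncard hIX hX

lemma indep_finite [M.Finite] (hI : M.Indep I) : I.Finite :=
  M.ground_finite.subset hI.subset_ground

lemma rk_eq_ncard_of_basis' [M.Finite] (h : M.IsBasis' I X) : M.rk X = I.ncard := by
  obtain ⟨I₀, hI₀X, hI₀, hcard⟩ := M.exists_rk_indep X
  obtain ⟨K, hK, hIK⟩ := hI₀.subset_isBasis'_of_subset hI₀X
  have h1 : (M ↾ X).IsBase I := isBase_restrict_iff'.2 h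
  have h2 : (M ↾ X).IsBase K := isBase_restrict_iff'.2 hK
  have hcard2 : I.ncard = K.ncard := h1.ncard_eq_ncard_of_isBase h2
  have hKle : K.ncard ≤ M.rk X := ncard_le_rk_of_indep hK.subset hK.indep
  have hle : I₀.ncard ≤ K.ncard := Set.ncard_le_ncard hIK (indep_finite hK.indep)
  omega

lemma rk_closure_eq' (M : Matroid α) [M.Finite] (X : Set α) :
    M.rk (M.closure X) = M.rk X := by
  obtain ⟨I, hI⟩ := M.exists_isBasis' X
  have h1 : M.IsBasis I (M.closure X) := hI.isBasis_closure_right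
  rw [rk_eq_ncard_of_basis' hI, rk_eq_ncard_of_basis' h1.isBasis']

lemma rk_restrict (M : Matroid α) (hYX : Y ⊆ X) : (M ↾ X).rk Y = M.rk Y := by
  show sSup _ = sSup _
  congr 1
  ext n
  constructor <;> rintro ⟨I, hIY, hI, rfl⟩
  · exact ⟨I, hIY, hI.of_restrict, rfl⟩
  · exact ⟨I, hIY, hI.indep_restrict_of_subset (hIY.trans hYX), rfl⟩

lemma contract_ground' (M : Matroid α) (C : Set α) : (M.contract' C).E = M.E \ C := rfl

lemma contract'_finite [M.Finite] {C : Set α} : (M.contract' C).Finite :=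
  ⟨M.ground_finite.subset diff_subset⟩

lemma contract_indep_iff_of_indep (hJ : M.Indep J) :
    (M.contract' J).Indep I ↔ Disjoint I J ∧ M.Indep (I ∪ J) := by
  have hJE := hJ.subset_ground
  have hbase : ∀ B, (M✶ ↾ (M.E \ J)).IsBase B ↔ M✶.IsBasis B (M.E \ J) := by
    intro B
    rw [isBase_restrict_iff',
      isBasis'_iff_isBasis (show M.E \ J ⊆ M✶.E by rw [dual_ground]; exact diff_subset)]
  rw [show M.contract' J = (M✶ ↾ (M✶.E \ J))✶ from rfl, dual_indep_iff_exists',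
    restrict_ground_eq, dual_ground]
  constructor
  · rintro ⟨hIE, B, hB, hIB⟩
    rw [hbase] at hB
    have hBJ : B ⊆ M.E \ J := hB.subset
    have hJB : J ⊆ M.E \ B := fun x hx => ⟨hJE hx, fun hxB => (hBJ hxB).2 hx⟩
    have hBind : M✶.Indep B := hB.indep
    rw [dual_indep_iff_exists (hBJ.trans diff_subset)] at hBind
    obtain ⟨B₁, hB₁, hBB₁⟩ := hBind
    obtain ⟨J', hJ', hJJ'⟩ := hJ.subset_isBasis_of_subset hJB diff_subset
    have hB₁J' : B₁ ⊆ M.closure J' := fun x hx =>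
      hJ'.subset_closure ⟨hB₁.subset_ground hx, fun hxB => hBB₁.ne_of_mem hxB hx rfl⟩
    have hJ'base : M.IsBase J' := hJ'.indep.isBase_of_ground_subset_closure
      (by rw [← hB₁.closure_eq]
          exact closure_subset_closure_of_subset_closure hB₁J')
    have hIJ' : I ⊆ J' := by
      intro i hi
      by_contra hiJ'
      have hBi : M✶.Indep (insert i B) := by
        rw [dual_indep_iff_exists (insert_subset (hIE hi).1 (hBJ.trans diff_subset))]
        refine ⟨J', hJ'base, Set.disjoint_left.2 ?_⟩
        rintro x (rfl | hxB)
        · exact fun h => hiJ' h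
        · exact fun h => ((hJ'.subset h).2 hxB)
      have heq := hB.eq_of_subset_indep hBi (subset_insert _ _)
        (insert_subset (hIE hi) hBJ)
      exact hIB.ne_of_mem hi (heq ▸ mem_insert i B) rfl
    exact ⟨Set.disjoint_left.2 fun x hx hxJ => (hIE hx).2 hxJ,
      hJ'base.indep.subset (union_subset hIJ' hJJ')⟩
  · rintro ⟨hdis, hIJ⟩
    obtain ⟨B₀, hB₀, hIJB₀⟩ := hIJ.exists_isBase_superset
    have hJB₀ : J ⊆ B₀ := subset_union_right.trans hIJB₀
    have hIE : I ⊆ M.E \ J :=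
      subset_diff.2 ⟨subset_union_left.trans hIJ.subset_ground, hdis⟩
    refine ⟨hIE, M.E \ B₀, ?_, ?_⟩
    · rw [hbase]
      have hdual : M✶.IsBase (M.E \ B₀) := hB₀.compl_isBase_dual
      obtain ⟨K, hK, hsub⟩ := hdual.indep.subset_isBasis_of_subset
        (diff_subset_diff_right hJB₀)
        (show M.E \ J ⊆ M✶.E by rw [dual_ground]; exact diff_subset)
      rwa [hdual.eq_of_subset_indep hK.indep hsub]
    · exact Set.disjoint_left.2 fun x hx hxB =>
        hxB.2 (subset_union_left.trans hIJB₀ hx)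

end Statement15Aux


section Statement15Aux2

variable {α : Type*} {M : Matroid α} {I J X Y F B S : Set α} {a b d : ℕ}

lemma contract_rk_add_eq [M.Finite] (hJ : M.Indep J) :
    M.rk (X ∪ J) = (M.contract' J).rk X + J.ncard := by
  haveI : (M.contract' J).Finite := contract'_finite
  obtain ⟨I, hI⟩ := (M.contract' J).exists_isBasis' X
  have hIind := hI.indep
  rw [contract_indep_iff_of_indep hJ] at hIind
  obtain ⟨hdis, hIJ⟩ := hIind
  obtain ⟨K, hK, hsubK⟩ := hIJ.subset_isBasis'_of_subset
    (union_subset_union_left J hI.subset)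
  have hKeq : K = I ∪ J := by
    by_contra hne
    obtain ⟨x, hxK, hxIJ⟩ : ∃ x ∈ K, x ∉ I ∪ J := by
      by_contra h
      push_neg at h
      exact hne (hsubK.antisymm' h)
    have hxX : x ∈ X := by
      rcases hK.subset hxK with hx | hx
      · exact hx
      · exact absurd (Or.inr hx) hxIJ
    have hxI : x ∉ I := fun h => hxIJ (Or.inl h)
    have hxJ : x ∉ J := fun h => hxIJ (Or.inr h)
    have hins : (M.contract' J).Indep (insert x I) := by
      rw [contract_indep_iff_of_indep hJ]
      constructor
      · exact Set.disjoint_left.2 (by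
          rintro y (rfl | hy)
          · exact hxJ
          · exact fun hyJ => hdis.ne_of_mem hy hyJ rfl)
      · refine hK.indep.subset ?_
        rw [insert_union]
        exact insert_subset hxK hsubK
    have := hI.eq_of_subset_indep hins (subset_insert x I)
      (insert_subset hxX hI.subset)
    exact hxI (this ▸ mem_insert x I)
  have hIfin : I.Finite := indep_finite (hIJ.subset subset_union_left)
  have hJfin : J.Finite := indep_finite hJ
  rw [rk_eq_ncard_of_basis' hK, hKeq, rk_eq_ncard_of_basis' hI,
    Set.ncard_union_eq hdis hIfin hJfin]

lemma contract_rank_add_eq [M.Finite] (hJ : M.Indep J) :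
    M.rank = (M.contract' J).rank + J.ncard := by
  have h := contract_rk_add_eq hJ (X := M.E \ J)
  rw [diff_union_of_subset hJ.subset_ground] at h
  show M.rk M.E = (M.contract' J).rk (M.contract' J).E + J.ncard
  rw [contract_ground']
  exact h

lemma rank_eq_ncard_of_base [M.Finite] (hB : M.IsBase B) : M.rank = B.ncard :=
  rk_eq_ncard_of_basis' hB.isBasis_ground.isBasis'

/-- A tailored "no uniform minor" condition that interacts well with restriction. -/
def NoUnif (M : Matroid α) (a b : ℕ) : Prop :=
  ∀ J S : Set α, M.Indep J → S ⊆ M.E \ J → S.Finite → S.ncard = b →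
    ¬ ∀ I ⊆ S, ((M.contract' J).Indep I ↔ I.ncard ≤ a + 1)

lemma noUnif_of_not_hasUnifMinor (hU : ¬ M.HasUnifMinor (a + 1) b) :
    M.NoUnif a b := by
  intro J S hJ hS hSfin hScard hiff
  apply hU
  have hD : (M.contract' J).delete' ((M.E \ J) \ S) = (M.contract' J) ↾ S := by
    show (M.contract' J) ↾ ((M.contract' J).E \ ((M.E \ J) \ S)) = (M.contract' J) ↾ S
    rw [contract_ground', Set.diff_diff_right_self, Set.inter_eq_self_of_subset_right hS]
  refine ⟨(M.contract' J).delete' ((M.E \ J) \ S), ⟨J, _, rfl⟩, ?_, ?_, ?_⟩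
  · rw [hD, restrict_ground_eq]; exact hSfin
  · rw [hD, restrict_ground_eq]; exact hScard
  · intro I hI
    rw [hD, restrict_ground_eq] at hI
    rw [hD, restrict_indep_iff, ← hiff I hI]
    exact ⟨fun h => h.1, fun h => ⟨h, hI⟩⟩

lemma NoUnif.restrict (h : M.NoUnif a b) (hF : F ⊆ M.E) : (M ↾ F).NoUnif a b := by
  intro J S hJ hS hSfin hScard hiff
  have hJ' : M.Indep J ∧ J ⊆ F := restrict_indep_iff.1 hJ
  have hSF : S ⊆ F \ J := by rwa [restrict_ground_eq] at hS
  refine h J S hJ'.1 (hSF.trans (diff_subset_diff_left hF)) hSfin hScard ?_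
  intro I hIS
  rw [← hiff I hIS, contract_indep_iff_of_indep hJ'.1, contract_indep_iff_of_indep hJ,
    restrict_indep_iff]
  have hIJF : I ∪ J ⊆ F :=
    union_subset ((hIS.trans hSF).trans diff_subset) hJ'.2
  tauto

end Statement15Aux2


section Statement15Aux3

variable {α : Type*} {M : Matroid α} {I J X Y F B S : Set α} {a b d : ℕ}

lemma key_cover [M.Finite] (ha : 1 ≤ a) (hab : a < b) (hNU : M.NoUnif a b)
    (hr : a + 1 ≤ M.rank) :
    ∃ ℱ : Finset (Set α), M.CoverOfGround ℱ ∧ ℱ.card ≤ (b - 1).choose a ∧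
      ∀ F ∈ ℱ, M.rk F + 1 ≤ M.rank := by
  classical
  obtain ⟨B, hB⟩ := M.exists_isBase
  have hBcard : M.rank = B.ncard := rank_eq_ncard_of_base hB
  obtain ⟨J, hJB, hJcard⟩ :=
    Set.exists_subset_card_eq (show M.rank - (a + 1) ≤ B.ncard by omega)
  have hJ : M.Indep J := hB.indep.subset hJB
  set N := M.contract' J with hN
  haveI : N.Finite := contract'_finite
  have hNE : N.E = M.E \ J := contract_ground' M J
  have hNEfin : N.E.Finite := N.ground_finite
  have hNrank : N.rank = a + 1 := by
    have h := contract_rank_add_eq hJ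
    rw [← hN] at h
    omega
  have hindep_le : ∀ I, N.Indep I → I.ncard ≤ a + 1 := by
    intro I hI
    have := ncard_le_rk_of_indep hI.subset_ground hI
    rwa [← hNrank]
  -- maximal "clique" S
  set FS : Set (Set α) := {T | T ⊆ N.E ∧ ∀ I ⊆ T, I.ncard ≤ a + 1 → N.Indep I} with hFS
  have hFSfin : FS.Finite := hNEfin.finite_subsets.subset fun T hT => hT.1
  have hFSne : FS.Nonempty := ⟨∅, empty_subset _, fun I hI _ => by
    rw [subset_empty_iff.1 hI]; exact N.empty_indep⟩
  obtain ⟨S, hSFS, hSmax⟩ := Set.Finite.exists_maximalFor id FS hFSfin hFSne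
  have hSE : S ⊆ N.E := hSFS.1
  have hSP : ∀ I ⊆ S, I.ncard ≤ a + 1 → N.Indep I := hSFS.2
  have hSfin : S.Finite := hNEfin.subset hSE
  -- S has fewer than b elements
  have hSb : S.ncard < b := by
    by_contra hge
    push_neg at hge
    obtain ⟨S', hS'S, hS'card⟩ := Set.exists_subset_card_eq hge
    refine hNU J S' hJ ((hS'S.trans hSE).trans_eq hNE) (hSfin.subset hS'S) hS'card ?_
    intro I hIS'
    exact ⟨hindep_le I, fun h => hSP I (hIS'.trans hS'S) h⟩
  -- every element of N.E is in the closure of a small subset of S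
  have hcov : ∀ x ∈ N.E, ∃ A, A ⊆ S ∧ A.ncard ≤ a ∧ x ∈ N.closure A := by
    intro x hx
    by_cases hxS : x ∈ S
    · exact ⟨{x}, singleton_subset_iff.2 hxS, by simpa using ha,
        N.mem_closure_self x hx⟩
    have hmemFS : insert x S ∉ FS := by
      intro hmem
      have h' : S = insert x S := (subset_insert x S).antisymm (hSmax hmem (subset_insert x S))
      exact hxS (h' ▸ mem_insert x S)
    have hxE : insert x S ⊆ N.E := insert_subset hx hSE
    rw [hFS, mem_setOf_eq] at hmemFS
    push_neg at hmemFS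
    obtain ⟨I, hIsub, hIcard, hIdep⟩ := hmemFS hxE
    have hxI : x ∈ I := by
      by_contra hxI
      exact hIdep (hSP I ((subset_insert_iff_of_notMem hxI).1 hIsub) hIcard)
    have hIfin : I.Finite := (hSfin.insert x).subset hIsub
    have hI1 : 0 < I.ncard := (Set.ncard_pos hIfin).2 ⟨x, hxI⟩
    set A := I \ {x} with hA
    have hAS : A ⊆ S := by
      rintro y ⟨hyI, hyx⟩
      rcases hIsub hyI with rfl | hyS
      · exact absurd rfl hyx
      · exact hyS
    have hAcard : A.ncard = I.ncard - 1 := Set.ncard_diff_singleton_of_mem hxI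
    have hAind : N.Indep A := hSP A hAS (by omega)
    have hxA : x ∉ A := fun h => h.2 rfl
    have hIA : insert x A = I := by
      rw [hA, insert_diff_singleton, insert_eq_self.2 hxI]
    have hnotind : ¬ N.Indep (insert x A) := by rwa [hIA]
    rw [hAind.insert_indep_iff_of_notMem hxA] at hnotind
    have hxcl : x ∈ N.closure A := by
      by_contra hxcl
      exact hnotind ⟨hx, hxcl⟩
    exact ⟨A, hAS, by omega, hxcl⟩
  -- assemble the cover
  set m := min a S.ncard with hm
  have hmS : m ≤ S.ncard := min_le_right _ _
  have hScardFin : hSfin.toFinset.card = S.ncard := (Set.ncard_eq_toFinset_card S hSfin).symm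
  set 𝒜 : Finset (Finset α) := hSfin.toFinset.powersetCard m with h𝒜
  set ℱ : Finset (Set α) := 𝒜.image (fun A : Finset α => (N.closure ↑A ∪ J : Set α)) with hℱ
  have hpieceE : ∀ A : Finset α, (N.closure ↑A ∪ J : Set α) ⊆ M.E := by
    intro A
    refine union_subset ?_ hJ.subset_ground
    exact (N.closure_subset_ground _).trans (hNE ▸ diff_subset)
  have h𝒜ne : 𝒜.Nonempty := Finset.powersetCard_nonempty.2 (by omega)
  refine ⟨ℱ, ⟨?_, ?_⟩, ?_, ?_⟩
  · rintro F hF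
    rw [hℱ, Finset.mem_image] at hF
    obtain ⟨A, -, rfl⟩ := hF
    exact hpieceE A
  · intro x hx
    by_cases hxJ : x ∈ J
    · obtain ⟨A, hA⟩ := h𝒜ne
      exact ⟨N.closure ↑A ∪ J,
        Finset.mem_coe.2 (Finset.mem_image_of_mem _ hA), Or.inr hxJ⟩
    · have hxN : x ∈ N.E := hNE ▸ ⟨hx, hxJ⟩
      obtain ⟨A₀, hA₀S, hA₀card, hA₀cl⟩ := hcov x hxN
      have hA₀m : A₀.ncard ≤ m :=
        le_min hA₀card (Set.ncard_le_ncard hA₀S hSfin)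
      obtain ⟨Z, hA₀Z, hZS, hZcard⟩ :=
        Set.exists_subsuperset_card_eq hA₀S hA₀m hmS
      have hZfin : Z.Finite := hSfin.subset hZS
      have hZmem : hZfin.toFinset ∈ 𝒜 := by
        rw [h𝒜, Finset.mem_powersetCard]
        exact ⟨Set.Finite.toFinset_subset_toFinset.2 hZS,
          by rw [← Set.ncard_eq_toFinset_card Z hZfin]; exact hZcard⟩
      refine ⟨N.closure ↑(hZfin.toFinset) ∪ J, ?_, ?_⟩
      · exact Finset.mem_coe.2 (Finset.mem_image_of_mem _ hZmem)
      · left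
        refine N.closure_subset_closure ?_ hA₀cl
        rw [Set.Finite.coe_toFinset]
        exact hA₀Z
  · rw [hℱ]
    refine Finset.card_image_le.trans ?_
    rw [h𝒜, Finset.card_powersetCard, hScardFin]
    rcases le_or_gt a S.ncard with h | h
    · rw [hm, min_eq_left h]
      exact Nat.choose_le_choose a (by omega)
    · rw [hm, min_eq_right h.le, Nat.choose_self]
      exact Nat.succ_le_of_lt (Nat.choose_pos (by omega))
  · intro F hF
    rw [hℱ, Finset.mem_image] at hF
    obtain ⟨A, hA, rfl⟩ := hF
    rw [h𝒜, Finset.mem_powersetCard] at hA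
    have hAS : (↑A : Set α) ⊆ S := fun y hy => hSfin.mem_toFinset.1 (hA.1 hy)
    have h1 : M.rk (N.closure ↑A ∪ J) = N.rk (N.closure ↑A) + J.ncard :=
      contract_rk_add_eq hJ
    have h2 : N.rk (N.closure ↑A) = N.rk ↑A := rk_closure_eq' N ↑A
    have h3 : N.rk ↑A ≤ m := by
      have := rk_le_ncard (M := N) (X := (↑A : Set α)) A.finite_toSet
      rwa [Set.ncard_coe_finset, hA.2] at this
    have hma : m ≤ a := min_le_left _ _
    omega

end Statement15Aux3


/-- If `1 ≤ a < b`, `d ≥ C(b,a)` and `M` is a finite matroid with no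
`U_{a+1,b}`-minor, then no `d`-minimal cover of `M` contains a set of rank greater than `a`,
and `τ_a(M) ≤ τ^d(M) ≤ d^a · τ_a(M)`. -/
theorem statement15 {α : Type*} (a b d : ℕ) (ha : 1 ≤ a) (hab : a < b)
    (hd : b.choose a ≤ d)
    (M : Matroid α) (hM : M.Finite) (hU : ¬ M.HasUnifMinor (a + 1) b) :
    (∀ ℱ : Finset (Set α), M.MinimalCoverOfGround d ℱ → ∀ F ∈ ℱ, M.rk F ≤ a) ∧
      M.tau a ≤ M.tauW d ∧ M.tauW d ≤ d ^ a * M.tau a := by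
  classical
  haveI := hM
  have hd1 : 1 ≤ d := le_trans (Nat.choose_pos hab.le) hd
  have hNU : M.NoUnif a b := noUnif_of_not_hasUnifMinor hU
  have hdd : (b - 1).choose a + 1 ≤ d := by
    have h1 : (b - 1).choose a + (b - 1).choose (a - 1) = b.choose a := by
      obtain ⟨b', rfl⟩ : ∃ b', b = b' + 1 := ⟨b - 1, by omega⟩
      obtain ⟨a', rfl⟩ : ∃ a', a = a' + 1 := ⟨a - 1, by omega⟩
      simp only [Nat.add_sub_cancel, Nat.choose_succ_succ, Nat.succ_eq_add_one]
      omega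
    have h2 : 1 ≤ (b - 1).choose (a - 1) := Nat.choose_pos (by omega)
    omega
  -- Part 1 : minimal covers only use sets of rank at most `a`
  have part1 : ∀ ℱ : Finset (Set α), M.MinimalCoverOfGround d ℱ → ∀ F ∈ ℱ, M.rk F ≤ a := by
    rintro ℱ ⟨⟨hsub, hcov⟩, hmin⟩ F hF
    by_contra hrk
    push_neg at hrk
    have hrk : a + 1 ≤ M.rk F := hrk
    have hFE : F ⊆ M.E := hsub F hF
    haveI : (M ↾ F).Finite := restrict_finite (M.ground_finite.subset hFE)
    have hrank : (M ↾ F).rank = M.rk F := by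
      show (M ↾ F).rk (M ↾ F).E = M.rk F
      rw [restrict_ground_eq, rk_restrict M Subset.rfl]
    obtain ⟨𝒢, ⟨h𝒢sub, h𝒢cov⟩, h𝒢card, h𝒢rk⟩ :=
      key_cover ha hab (hNU.restrict hFE) (by omega)
    have h𝒢F : ∀ G ∈ 𝒢, G ⊆ F := by
      intro G hG
      have := h𝒢sub G hG
      rwa [restrict_ground_eq] at this
    have h𝒢rk' : ∀ G ∈ 𝒢, M.rk G + 1 ≤ M.rk F := by
      intro G hG
      have h1 := h𝒢rk G hG
      rwa [hrank, rk_restrict M (h𝒢F G hG)] at h1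
    set ℱ' : Finset (Set α) := ℱ.erase F ∪ 𝒢 with hℱ'
    have hcov' : M.CoverOfGround ℱ' := by
      constructor
      · intro F' hF'
        rcases Finset.mem_union.1 hF' with h | h
        · exact hsub F' (Finset.mem_of_mem_erase h)
        · exact (h𝒢F F' h).trans hFE
      · intro x hx
        obtain ⟨F₀, hF₀, hxF₀⟩ := hcov hx
        rw [Finset.mem_coe] at hF₀
        by_cases hFF : F₀ = F
        · have hxF : x ∈ (M ↾ F).E := by rw [restrict_ground_eq]; exact hFF ▸ hxF₀
          obtain ⟨G, hG, hxG⟩ := h𝒢cov hxF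
          rw [Finset.mem_coe] at hG
          exact ⟨G, Finset.mem_coe.2 (Finset.mem_union_right _ hG), hxG⟩
        · exact ⟨F₀, Finset.mem_coe.2
            (Finset.mem_union_left _ (Finset.mem_erase.2 ⟨hFF, hF₀⟩)), hxF₀⟩
    have hwt𝒢 : M.wt d 𝒢 ≤ (b - 1).choose a * d ^ (M.rk F - 1) := by
      calc M.wt d 𝒢 ≤ 𝒢.card * d ^ (M.rk F - 1) := by
            refine (Finset.sum_le_card_nsmul _ _ _ ?_).trans_eq (nsmul_eq_mul _ _)
            intro G hG
            exact Nat.pow_le_pow_right hd1 (by have := h𝒢rk' G hG; omega)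
        _ ≤ _ := Nat.mul_le_mul_right _ h𝒢card
    have hlt𝒢 : M.wt d 𝒢 < d ^ M.rk F := by
      have hpos : 0 < d ^ (M.rk F - 1) := Nat.pow_pos hd1
      have h2 : (b - 1).choose a * d ^ (M.rk F - 1) < d * d ^ (M.rk F - 1) :=
        Nat.mul_lt_mul_of_lt_of_le (by omega) le_rfl hpos
      have h3 : d * d ^ (M.rk F - 1) = d ^ M.rk F := by
        rw [← pow_succ']
        congr 1
        omega
      omega
    have hsplit : M.wt d (ℱ.erase F) + d ^ M.rk F = M.wt d ℱ :=
      Finset.sum_erase_add ℱ _ hF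
    have hunion : M.wt d ℱ' ≤ M.wt d (ℱ.erase F) + M.wt d 𝒢 := by
      have := Finset.sum_union_inter (s₁ := ℱ.erase F) (s₂ := 𝒢)
        (f := fun F => d ^ M.rk F)
      show (∑ G ∈ ℱ.erase F ∪ 𝒢, d ^ M.rk G) ≤
        (∑ G ∈ ℱ.erase F, d ^ M.rk G) + ∑ G ∈ 𝒢, d ^ M.rk G
      omega
    have : M.wt d ℱ' < M.wt d ℱ := by omega
    exact absurd (hmin ℱ' hcov') (not_le.2 this)
  -- the singleton cover, witnessing nonemptiness of the optimization sets
  have hEfin := M.ground_finite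
  set 𝒮 : Finset (Set α) := hEfin.toFinset.image (fun x => ({x} : Set α)) with h𝒮
  have h𝒮sub : ∀ X ∈ 𝒮, X ⊆ M.E ∧ M.rk X ≤ a := by
    intro X hX
    rw [h𝒮, Finset.mem_image] at hX
    obtain ⟨x, hx, rfl⟩ := hX
    rw [Set.Finite.mem_toFinset] at hx
    refine ⟨singleton_subset_iff.2 hx, ?_⟩
    have h1 : M.rk {x} ≤ 1 := by
      simpa using rk_le_ncard (M := M) (X := {x}) (Set.finite_singleton x)
    exact h1.trans ha
  have h𝒮cov : M.CoverOfGround 𝒮 := by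
    refine ⟨fun X hX => (h𝒮sub X hX).1, fun x hx => ?_⟩
    refine ⟨{x}, Finset.mem_coe.2 ?_, rfl⟩
    rw [h𝒮, Finset.mem_image]
    exact ⟨x, Set.Finite.mem_toFinset _ |>.2 hx, rfl⟩
  -- tauW is attained by a minimal cover
  have hWne : {n | ∃ ℱ : Finset (Set α), M.CoverOfGround ℱ ∧ M.wt d ℱ = n}.Nonempty :=
    ⟨M.wt d 𝒮, 𝒮, h𝒮cov, rfl⟩
  obtain ⟨ℱ₀, hℱ₀cov, hℱ₀wt⟩ := Nat.sInf_mem hWne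
  have hℱ₀min : M.MinimalCoverOfGround d ℱ₀ :=
    ⟨hℱ₀cov, fun ℱ' h' => hℱ₀wt.symm ▸ Nat.sInf_le ⟨ℱ', h', rfl⟩⟩
  have hrk₀ := part1 ℱ₀ hℱ₀min
  -- tau is attained
  have hTne : {n | ∃ 𝒞 : Finset (Set α), 𝒞.card = n ∧
      (∀ X ∈ 𝒞, X ⊆ M.E ∧ M.rk X ≤ a) ∧ M.E ⊆ ⋃₀ ↑𝒞}.Nonempty :=
    ⟨𝒮.card, 𝒮, rfl, h𝒮sub, h𝒮cov.2⟩
  obtain ⟨𝒞, h𝒞card, h𝒞prop, h𝒞cov⟩ := Nat.sInf_mem hTne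
  refine ⟨part1, ?_, ?_⟩
  · -- tau a ≤ tauW d
    have h1 : M.tau a ≤ ℱ₀.card :=
      Nat.sInf_le ⟨ℱ₀, rfl, fun X hX => ⟨hℱ₀cov.1 X hX, hrk₀ X hX⟩, hℱ₀cov.2⟩
    have h2 : ℱ₀.card ≤ M.wt d ℱ₀ := by
      rw [Finset.card_eq_sum_ones]
      exact Finset.sum_le_sum fun X _ => Nat.one_le_pow _ _ hd1
    have h3 : M.wt d ℱ₀ = M.tauW d := hℱ₀wt
    omega
  · -- tauW d ≤ d ^ a * tau a
    have h1 : M.tauW d ≤ M.wt d 𝒞 :=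
      Nat.sInf_le ⟨𝒞, ⟨fun X hX => (h𝒞prop X hX).1, h𝒞cov⟩, rfl⟩
    have h2 : M.wt d 𝒞 ≤ 𝒞.card * d ^ a := by
      refine (Finset.sum_le_card_nsmul _ _ _ ?_).trans_eq (nsmul_eq_mul _ _)
      intro X hX
      exact Nat.pow_le_pow_right hd1 (h𝒞prop X hX).2
    have h3 : 𝒞.card = M.tau a := h𝒞card
    calc M.tauW d ≤ 𝒞.card * d ^ a := h1.trans h2
      _ = d ^ a * M.tau a := by rw [h3, Nat.mul_comm]

end Matroid
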